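/- Let A be a real n×n matrix, B a real n×m matrix, x, x_v ∈ ℝⁿ and u*, u_v, û, u*^Σ ∈ ℝᵐ with (A − I)x_v + B u_v = 0, ‖û − u*^Σ‖ ≤ Σ and ‖u*^Σ − u*‖ ≤ φΣ for Σ ≥ 0, φ ≥ 0. Suppose h > 0 and ψ ≥ 0 satisfy h(‖x − x_v‖² + ‖u* − u_v‖²) ≤ ψ². Let 0 < π₁ < 1 and 0 < π₂ < 1, and define the updated tightening parameter Σ₊ = π₁Σ + π₂‖(Ax + Bû) − x‖. Then Σ₊ ≤ (1 − α₂)Σ + ζ₂ψ, where α₂ = 1 − (π₁ + π₂‖B‖(φ + 1)) and ζ₂ = π₂(‖A − I‖ + ‖B‖)/√h. -/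
import Mathlib


/-- The operator norm (largest singular value) of a real matrix, viewed as a linear
map between Euclidean spaces. -/
noncomputable def matOpNorm {n m : ℕ} (B : Matrix (Fin n) (Fin m) ℝ) : ℝ :=
  ‖LinearMap.toContinuousLinearMap (Matrix.toEuclideanLin B)‖

lemma matOpNorm_nonneg {n m : ℕ} (B : Matrix (Fin n) (Fin m) ℝ) : 0 ≤ matOpNorm B :=
  norm_nonneg _

lemma matOpNorm_apply_le {n m : ℕ} (B : Matrix (Fin n) (Fin m) ℝ)
    (v : EuclideanSpace ℝ (Fin m)) :
    ‖Matrix.toEuclideanLin B v‖ ≤ matOpNorm B * ‖v‖ :=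
  (LinearMap.toContinuousLinearMap (Matrix.toEuclideanLin B)).le_opNorm v

/-- Inequality (29) of Lemma 1: with the constraint-tightening
update `Σ₊ = π₁Σ + π₂‖(Ax + Bû) − x‖` one has `Σ₊ ≤ (1 − α₂)Σ + ζ₂ψ`, where
`α₂ = 1 - (π₁ + π₂‖B‖(φ+1))` and `ζ₂ = π₂(‖A − I‖ + ‖B‖)/√h`. -/
theorem stmt_4 (n m : ℕ)
    (A : Matrix (Fin n) (Fin n) ℝ) (B : Matrix (Fin n) (Fin m) ℝ)
    (x x_v : EuclideanSpace ℝ (Fin n)) (ustar u_v uhat ustarS : EuclideanSpace ℝ (Fin m))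
    (heq : Matrix.toEuclideanLin A x_v - x_v + Matrix.toEuclideanLin B u_v = 0)
    (σ φ : ℝ) (hσ : 0 ≤ σ) (hφ : 0 ≤ φ)
    (h1 : ‖uhat - ustarS‖ ≤ σ) (h2 : ‖ustarS - ustar‖ ≤ φ * σ)
    (h ψ : ℝ) (hh : 0 < h) (hψ : 0 ≤ ψ)
    (hbound : h * (‖x - x_v‖ ^ 2 + ‖ustar - u_v‖ ^ 2) ≤ ψ ^ 2)
    (π₁ π₂ : ℝ) (hπ₁ : 0 < π₁ ∧ π₁ < 1) (hπ₂ : 0 < π₂ ∧ π₂ < 1)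
    (σplus α₂ ζ₂ : ℝ)
    (hσplus : σplus = π₁ * σ +
      π₂ * ‖(Matrix.toEuclideanLin A x + Matrix.toEuclideanLin B uhat) - x‖)
    (hα₂ : α₂ = 1 - (π₁ + π₂ * matOpNorm B * (φ + 1)))
    (hζ₂ : ζ₂ = π₂ * (matOpNorm (A - 1) + matOpNorm B) / Real.sqrt h) :
    σplus ≤ (1 - α₂) * σ + ζ₂ * ψ := by
  have hs : (0:ℝ) < Real.sqrt h := Real.sqrt_pos.mpr hh
  have hs2 : Real.sqrt h * Real.sqrt h = h := Real.mul_self_sqrt hh.le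
  -- bounds on ‖x - x_v‖ and ‖ustar - u_v‖
  have hX : ‖x - x_v‖ ≤ ψ / Real.sqrt h := by
    rw [le_div_iff₀ hs]
    nlinarith [norm_nonneg (x - x_v), norm_nonneg (ustar - u_v), sq_nonneg (‖ustar - u_v‖)]
  have hU : ‖ustar - u_v‖ ≤ ψ / Real.sqrt h := by
    rw [le_div_iff₀ hs]
    nlinarith [norm_nonneg (x - x_v), norm_nonneg (ustar - u_v)]
  -- decomposition
  have hone : ∀ v : EuclideanSpace ℝ (Fin n),
      Matrix.toEuclideanLin (1 : Matrix (Fin n) (Fin n) ℝ) v = v := by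
    intro v
    apply (WithLp.equiv 2 (Fin n → ℝ)).injective
    simp [Matrix.toEuclideanLin_apply]
  have hdec : (Matrix.toEuclideanLin A x + Matrix.toEuclideanLin B uhat) - x =
      Matrix.toEuclideanLin (A - 1) (x - x_v)
      + Matrix.toEuclideanLin B (uhat - ustarS)
      + Matrix.toEuclideanLin B (ustarS - ustar)
      + Matrix.toEuclideanLin B (ustar - u_v) := by
    have hsub : Matrix.toEuclideanLin (A - 1)
        = Matrix.toEuclideanLin A - Matrix.toEuclideanLin (1 : Matrix (Fin n) (Fin n) ℝ) :=
      map_sub _ _ _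
    have h1' : Matrix.toEuclideanLin (A - 1) (x - x_v)
        = Matrix.toEuclideanLin A x - x - Matrix.toEuclideanLin A x_v + x_v := by
      rw [hsub]
      simp only [LinearMap.sub_apply, map_sub, hone]
      abel
    have h0 : Matrix.toEuclideanLin A x_v = x_v - Matrix.toEuclideanLin B u_v := by
      have hz : Matrix.toEuclideanLin A x_v - (x_v - Matrix.toEuclideanLin B u_v) = 0 := by
        rw [← heq]; abel
      exact sub_eq_zero.mp hz
    rw [h1', map_sub, map_sub, map_sub, h0]
    abel
  have hN : ‖(Matrix.toEuclideanLin A x + Matrix.toEuclideanLin B uhat) - x‖ ≤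
      matOpNorm (A - 1) * (ψ / Real.sqrt h) + matOpNorm B * σ
      + matOpNorm B * (φ * σ) + matOpNorm B * (ψ / Real.sqrt h) := by
    rw [hdec]
    have t1 := matOpNorm_apply_le (A - 1) (x - x_v)
    have t2 := matOpNorm_apply_le B (uhat - ustarS)
    have t3 := matOpNorm_apply_le B (ustarS - ustar)
    have t4 := matOpNorm_apply_le B (ustar - u_v)
    have nB := matOpNorm_nonneg B
    have nA := matOpNorm_nonneg (A - 1)
    set a := Matrix.toEuclideanLin (A - 1) (x - x_v)
    set b := Matrix.toEuclideanLin B (uhat - ustarS)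
    set c := Matrix.toEuclideanLin B (ustarS - ustar)
    set d := Matrix.toEuclideanLin B (ustar - u_v)
    have step : ‖a + b + c + d‖ ≤ ‖a‖ + ‖b‖ + ‖c‖ + ‖d‖ := by
      calc ‖a + b + c + d‖ ≤ ‖a + b + c‖ + ‖d‖ := norm_add_le _ _
        _ ≤ (‖a + b‖ + ‖c‖) + ‖d‖ := by gcongr; exact norm_add_le _ _
        _ ≤ ((‖a‖ + ‖b‖) + ‖c‖) + ‖d‖ := by gcongr; exact norm_add_le _ _
    refine step.trans ?_
    gcongr ?_ + ?_ + ?_ + ?_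
    · exact t1.trans (mul_le_mul_of_nonneg_left hX nA)
    · exact t2.trans (mul_le_mul_of_nonneg_left h1 nB)
    · exact t3.trans (mul_le_mul_of_nonneg_left h2 nB)
    · exact t4.trans (mul_le_mul_of_nonneg_left hU nB)
  have nB := matOpNorm_nonneg B
  have nA := matOpNorm_nonneg (A - 1)
  rw [hσplus, hα₂, hζ₂]
  have hπ2 := hπ₂.1
  have key : π₂ * ‖(Matrix.toEuclideanLin A x + Matrix.toEuclideanLin B uhat) - x‖
      ≤ π₂ * (matOpNorm (A - 1) * (ψ / Real.sqrt h) + matOpNorm B * σ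
      + matOpNorm B * (φ * σ) + matOpNorm B * (ψ / Real.sqrt h)) := by
    exact mul_le_mul_of_nonneg_left hN hπ2.le
  have expand : (1 - (1 - (π₁ + π₂ * matOpNorm B * (φ + 1)))) * σ
      + π₂ * (matOpNorm (A - 1) + matOpNorm B) / Real.sqrt h * ψ
      = π₁ * σ + π₂ * (matOpNorm (A - 1) * (ψ / Real.sqrt h) + matOpNorm B * σ
        + matOpNorm B * (φ * σ) + matOpNorm B * (ψ / Real.sqrt h)) := by
    field_simp
    ring
  rw [expand]
  linarith [key]
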